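/- Let 0 < p \leq 1/2. Assume the norm estimate \|\sigma_n f\|_{H_p} \leq c_p n^{1/p - 2} \log^{2[1/2+p]} n \cdot \|f\|_{H_p} holds for all n \geq 2, and that \|\sigma_{M_N} f - f\|_{H_p} \to 0. If f \in H_p satisfies \omega_{H_p}(1/M_N, f) = o(M_N^{-(1/p-2)} N^{-2[1/2+p]}) as N \to \infty, then \|\sigma_n f - f\|_{H_p} \to 0 as n \to \infty. -/

import Mathlib

open MeasureTheory Complex Filter
open scoped Classical
open scoped ENNReal NNReal

noncomputable section

def vM (m : ℕ → ℕ) : ℕ → ℕ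
  | 0 => 1
  | n + 1 => m n * vM m n

abbrev VG (m : ℕ → ℕ) := ∀ k : ℕ, Fin (m k)

def vdigit (m : ℕ → ℕ) (n j : ℕ) : ℕ := (n / vM m j) % m j

def vpsi (m : ℕ → ℕ) (n : ℕ) (x : VG m) : ℂ :=
  ∏ k ∈ Finset.range (n + 1),
    Complex.exp (2 * Real.pi * Complex.I * (vdigit m n k) * ((x k : ℕ) : ℂ) / (m k))

def vD (m : ℕ → ℕ) (n : ℕ) (x : VG m) : ℂ := ∑ k ∈ Finset.range n, vpsi m k x

variable {m : ℕ → ℕ}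

def vCoeff (μ : Measure (VG m)) (f : VG m → ℂ) (i : ℕ) : ℂ :=
  ∫ x, f x * (starRingEnd ℂ) (vpsi m i x) ∂μ

def vS (μ : Measure (VG m)) (f : VG m → ℂ) (n : ℕ) (x : VG m) : ℂ :=
  ∑ k ∈ Finset.range n, vCoeff μ f k * vpsi m k x

def vSigma (μ : Measure (VG m)) (f : VG m → ℂ) (n : ℕ) (x : VG m) : ℂ :=
  (n : ℂ)⁻¹ * ∑ k ∈ Finset.Icc 1 n, vS μ f k x

def vCyl (m : ℕ → ℕ) (n : ℕ) (x : VG m) : Set (VG m) := {y | ∀ i < n, y i = x i}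

def vI (m : ℕ → ℕ) (n : ℕ) : Set (VG m) := {y | ∀ i < n, (y i : ℕ) = 0}

def isVHaar (μ : Measure (VG m)) : Prop :=
  ∀ n (x : VG m), μ (vCyl m n x) = ((vM m n : ℝ≥0∞))⁻¹

def vHp (μ : Measure (VG m)) (p : ℝ) (f : VG m → ℂ) : ℝ≥0∞ :=
  (∫⁻ x, (⨆ k, ENNReal.ofReal ‖vS μ f (vM m k) x‖) ^ p ∂μ) ^ (1 / p)

def vLpE (μ : Measure (VG m)) (p : ℝ) (g : VG m → ℝ≥0∞) : ℝ≥0∞ :=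
  (∫⁻ x, (g x) ^ p ∂μ) ^ (1 / p)


lemma vM_succ (n : ℕ) : vM m (n+1) = m n * vM m n := rfl

lemma vM_pos (hm : ∀ k, 2 ≤ m k) (n : ℕ) : 0 < vM m n := by
  induction n with
  | zero => simp [vM]
  | succ n ih => have := hm n; rw [vM_succ]; positivity

lemma lt_vM (hm : ∀ k, 2 ≤ m k) (n : ℕ) : n < vM m n := by
  induction n with
  | zero => simp [vM]
  | succ n ih => have := hm n; rw [vM_succ]; nlinarith

lemma vM_mono (hm : ∀ k, 2 ≤ m k) : Monotone (vM m) := by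
  apply monotone_nat_of_le_succ
  intro n; rw [vM_succ]
  have := hm n
  nlinarith [vM_pos hm n]

lemma vM_succ_dvd (hm : ∀ k, 2 ≤ m k) {i L : ℕ} (h : i < L) : vM m (i+1) ∣ vM m L := by
  induction L with
  | zero => omega
  | succ L ih =>
    rcases Nat.lt_succ_iff_lt_or_eq.1 h with h' | h'
    · exact (ih h').trans ⟨m L, by rw [vM_succ]; ring⟩
    · rw [h']

lemma vdigit_lt (hm : ∀ k, 2 ≤ m k) (n j : ℕ) : vdigit m n j < m j :=
  Nat.mod_lt _ (by have := hm j; omega)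

lemma vdigit_eq_zero (hm : ∀ k, 2 ≤ m k) {n j : ℕ} (h : n < vM m j) : vdigit m n j = 0 := by
  unfold vdigit; rw [Nat.div_eq_of_lt h]; simp

lemma vdigit_mod (hm : ∀ k, 2 ≤ m k) {i L : ℕ} (h : i < L) (n : ℕ) :
    vdigit m (n % vM m L) i = vdigit m n i := by
  obtain ⟨c, hc⟩ := vM_succ_dvd hm h
  have hn := Nat.div_add_mod n (vM m L)
  have key : vM m i * (m i * (c * (n / vM m L))) = vM m L * (n / vM m L) := by
    rw [hc, vM_succ]; ring
  have h1 : n = vM m i * (m i * (c * (n / vM m L))) + n % vM m L := by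
    rw [key]; omega
  have h2 : n / vM m i % m i = (n % vM m L) / vM m i % m i := by
    conv_lhs => rw [h1]
    rw [Nat.mul_add_div (vM_pos hm i), Nat.mul_add_mod]
  exact h2.symm

lemma vdigit_top (hm : ∀ k, 2 ≤ m k) {n L : ℕ} (h : n < vM m (L+1)) :
    vdigit m n L = n / vM m L := by
  unfold vdigit
  apply Nat.mod_eq_of_lt
  rw [Nat.div_lt_iff_lt_mul (vM_pos hm L)]
  rw [vM_succ] at h; omega

lemma vdigit_inj (hm : ∀ k, 2 ≤ m k) {L j k : ℕ} (hj : j < vM m L) (hk : k < vM m L)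
    (h : ∀ i < L, vdigit m j i = vdigit m k i) : j = k := by
  induction L generalizing j k with
  | zero => simp [vM] at hj hk; omega
  | succ L ih =>
    have hd : j / vM m L = k / vM m L := by
      have := h L (Nat.lt_succ_self L)
      rwa [vdigit_top hm hj, vdigit_top hm hk] at this
    have hmod : j % vM m L = k % vM m L := by
      apply ih (Nat.mod_lt _ (vM_pos hm L)) (Nat.mod_lt _ (vM_pos hm L))
      intro i hi
      rw [vdigit_mod hm hi, vdigit_mod hm hi]
      exact h i (hi.trans (Nat.lt_succ_self L))
    have h1 := Nat.div_add_mod j (vM m L)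
    have h2 := Nat.div_add_mod k (vM m L)
    rw [← h1, ← h2, hd, hmod]


-- PART B : characters
def vfac (m : ℕ → ℕ) (d k a : ℕ) : ℂ :=
  Complex.exp (2 * Real.pi * Complex.I * (d : ℂ) * (a : ℂ) / (m k))

lemma vpsi_eq_prod_vfac (n : ℕ) (x : VG m) :
    vpsi m n x = ∏ k ∈ Finset.range (n + 1), vfac m (vdigit m n k) k (x k) := rfl

lemma vfac_eq (d k a : ℕ) :
    vfac m d k a = Complex.exp (((2 * Real.pi * d * a / m k : ℝ) : ℂ) * Complex.I) := by
  unfold vfac; congr 1; push_cast; ring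

lemma vfac_abs (d k a : ℕ) : ‖vfac m d k a‖ = 1 := by
  rw [vfac_eq]; exact Complex.norm_exp_ofReal_mul_I _

lemma vfac_zero (k a : ℕ) : vfac m 0 k a = 1 := by
  unfold vfac; norm_num

lemma vpsi_abs (n : ℕ) (x : VG m) : ‖vpsi m n x‖ = 1 := by
  rw [vpsi_eq_prod_vfac, norm_prod]
  exact Finset.prod_eq_one (fun k _ => vfac_abs _ k _)

lemma vpsi_measurable (n : ℕ) : Measurable (vpsi m n) := by
  have h : vpsi m n = fun x => ∏ k ∈ Finset.range (n + 1),
      (fun a : Fin (m k) => vfac m (vdigit m n k) k a) (x k) := rfl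
  rw [h]
  exact Finset.measurable_prod _
    (fun k _ => (Measurable.of_discrete
      (f := fun a : Fin (m k) => vfac m (vdigit m n k) k a)).comp (measurable_pi_apply k))

lemma vpsi_integrable {μ : Measure (VG m)} [IsFiniteMeasure μ] (n : ℕ) :
    Integrable (vpsi m n) μ := by
  apply Integrable.mono' (integrable_const 1) (vpsi_measurable n).aestronglyMeasurable
  filter_upwards with x
  simp [vpsi_abs]

lemma integrable_mul_conj_vpsi {μ : Measure (VG m)} [IsFiniteMeasure μ] {g : VG m → ℂ}
    (hg : Integrable g μ) (i : ℕ) :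
    Integrable (fun x => g x * (starRingEnd ℂ) (vpsi m i x)) μ := by
  have : (fun x => g x * (starRingEnd ℂ) (vpsi m i x))
      = fun x => ((starRingEnd ℂ) (vpsi m i x)) * g x := by
    funext x; ring
  rw [this]
  apply hg.bdd_mul (c := 1) (Complex.continuous_conj.measurable.comp (vpsi_measurable i)).aestronglyMeasurable
  exact Eventually.of_forall (fun x => by simp [vpsi_abs])

lemma vpsi_extend (hm : ∀ k, 2 ≤ m k) {n L : ℕ} (hL : n + 1 ≤ L) (x : VG m) :
    vpsi m n x = ∏ k ∈ Finset.range L, vfac m (vdigit m n k) k (x k) := by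
  rw [vpsi_eq_prod_vfac]
  apply Finset.prod_subset (Finset.range_subset_range.2 hL)
  intro k _ hk
  simp only [Finset.mem_range, not_lt] at hk
  have hnk : n < vM m k := lt_of_lt_of_le (lt_vM hm n) (vM_mono hm (by omega))
  rw [vdigit_eq_zero hm hnk, vfac_zero]

lemma vCyl_measurableSet (L : ℕ) (x : VG m) : MeasurableSet (vCyl m L x) := by
  have : vCyl m L x = ⋂ i ∈ Set.Iio L, (fun y : VG m => y i) ⁻¹' {x i} := by
    ext y; simp [vCyl]
  rw [this]
  exact MeasurableSet.biInter (Set.to_countable _)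
    (fun i _ => (measurable_pi_apply i) (MeasurableSet.singleton _))


-- PART C : orthogonality
lemma vfac_mul_conj (d1 d2 i a : ℕ) :
    vfac m d1 i a * (starRingEnd ℂ) (vfac m d2 i a) =
      Complex.exp (((2 * Real.pi * ((d1 : ℝ) - d2) / m i : ℝ) : ℂ) * Complex.I) ^ a := by
  rw [vfac_eq, vfac_eq, ← Complex.exp_conj, ← Complex.exp_nat_mul, ← Complex.exp_add]
  congr 1
  rw [map_mul, Complex.conj_ofReal, Complex.conj_I]
  push_cast
  ring

lemma vfac_sum_eq_zero (hm : ∀ k, 2 ≤ m k) {d1 d2 i : ℕ} (h1 : d1 < m i) (h2 : d2 < m i)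
    (hne : d1 ≠ d2) :
    ∑ a : Fin (m i), vfac m d1 i (a : ℕ) * (starRingEnd ℂ) (vfac m d2 i (a : ℕ)) = 0 := by
  set θ : ℝ := 2 * Real.pi * ((d1 : ℝ) - d2) / m i with hθ
  set r : ℂ := Complex.exp ((θ : ℂ) * Complex.I) with hr
  have hsum : ∑ a : Fin (m i), vfac m d1 i (a : ℕ) * (starRingEnd ℂ) (vfac m d2 i (a : ℕ))
      = ∑ a ∈ Finset.range (m i), r ^ a := by
    rw [← Fin.sum_univ_eq_sum_range (fun a => r ^ a) (m i)]
    exact Finset.sum_congr rfl (fun a _ => vfac_mul_conj d1 d2 i a)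
  have hmipos : 0 < m i := by have := hm i; omega
  have hmiR : (0:ℝ) < (m i : ℝ) := by exact_mod_cast hmipos
  have hr1 : r ≠ 1 := by
    intro hcon
    rw [hr, Complex.exp_eq_one_iff] at hcon
    obtain ⟨n, hn⟩ := hcon
    have h3 : ((θ : ℝ) : ℂ) * Complex.I = ((n * (2 * Real.pi) : ℝ) : ℂ) * Complex.I := by
      rw [hn]; push_cast; ring
    have h4 : θ = n * (2 * Real.pi) := by
      exact_mod_cast mul_right_cancel₀ Complex.I_ne_zero h3
    have h4' : 2 * Real.pi * ((d1 : ℝ) - d2) = 2 * Real.pi * (n * m i) := by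
      rw [hθ] at h4
      field_simp at h4
      rw [h4]; ring
    have h5 : (d1 : ℝ) - d2 = n * m i :=
      mul_left_cancel₀ (by positivity : (2 * Real.pi) ≠ 0) h4'
    have h6 : (d1 : ℤ) - d2 = n * m i := by exact_mod_cast h5
    have hd1 : (d1 : ℤ) < m i := by exact_mod_cast h1
    have hd2 : (d2 : ℤ) < m i := by exact_mod_cast h2
    have hne' : (d1 : ℤ) ≠ d2 := by exact_mod_cast hne
    have hmiZ : (0 : ℤ) < m i := by exact_mod_cast hmipos
    rcases lt_trichotomy n 0 with hn0 | hn0 | hn0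
    · have : n ≤ -1 := by omega
      nlinarith [Int.natCast_nonneg d1, Int.natCast_nonneg d2]
    · rw [hn0] at h6; simp at h6; omega
    · have : 1 ≤ n := by omega
      nlinarith [Int.natCast_nonneg d1, Int.natCast_nonneg d2]
  have hpow : r ^ (m i) = 1 := by
    rw [hr, ← Complex.exp_nat_mul]
    have hmiC : ((m i : ℕ) : ℂ) ≠ 0 := by exact_mod_cast hmipos.ne'
    have hexp : ((m i : ℕ) : ℂ) * (((θ : ℝ) : ℂ) * Complex.I)
        = ((((d1 : ℤ) - (d2 : ℤ)) : ℤ) : ℂ) * (2 * (Real.pi : ℂ) * Complex.I) := by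
      rw [hθ]
      push_cast
      field_simp
    rw [hexp, Complex.exp_int_mul_two_pi_mul_I]
  rw [hsum, geom_sum_eq hr1, hpow]
  simp

lemma vpsi_orth (hm : ∀ k, 2 ≤ m k) {μ : Measure (VG m)} [IsProbabilityMeasure μ]
    (hμ : isVHaar μ) (j k : ℕ) :
    ∫ x, vpsi m j x * (starRingEnd ℂ) (vpsi m k x) ∂μ = if j = k then 1 else 0 := by
  by_cases hjk : j = k
  · subst hjk
    rw [if_pos rfl]
    have h1 : ∀ x, vpsi m j x * (starRingEnd ℂ) (vpsi m j x) = 1 := fun x => by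
      rw [Complex.mul_conj, ← Complex.sq_norm, vpsi_abs]; norm_num
    simp only [h1]
    simp
  · rw [if_neg hjk]
    set L := max j k + 1 with hLdef
    set H : (∀ i : Fin L, Fin (m i)) → ℂ := fun t =>
      ∏ i : Fin L, (vfac m (vdigit m j i) i (t i) * (starRingEnd ℂ) (vfac m (vdigit m k i) i (t i)))
      with hH
    have hxprod : ∀ x : VG m, vpsi m j x * (starRingEnd ℂ) (vpsi m k x)
        = H (fun i : Fin L => x i) := by
      intro x
      rw [vpsi_extend hm (L := L) (by omega) x, vpsi_extend hm (L := L) (by omega) x,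
        map_prod, ← Finset.prod_mul_distrib, hH]
      exact (Fin.prod_univ_eq_prod_range
        (fun i => vfac m (vdigit m j i) i (x i) * (starRingEnd ℂ) (vfac m (vdigit m k i) i (x i)))
        L).symm
    -- preimages are cylinders
    have hcylset : ∀ t : (∀ i : Fin L, Fin (m i)),
        (fun y : VG m => (fun i : Fin L => y i)) ⁻¹' {t}
          = vCyl m L (fun i => if h : i < L then t ⟨i, h⟩ else ⟨0, by have := hm i; omega⟩) := by
      intro t; ext y
      simp only [Set.mem_preimage, Set.mem_singleton_iff, vCyl, Set.mem_setOf_eq, funext_iff]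
      constructor
      · intro h i hi
        rw [dif_pos hi]
        exact h ⟨i, hi⟩
      · intro h i
        have := h i i.isLt
        rwa [dif_pos i.isLt] at this
    have hmeas : ∀ t : (∀ i : Fin L, Fin (m i)),
        MeasurableSet ((fun y : VG m => (fun i : Fin L => y i)) ⁻¹' {t}) := by
      intro t; rw [hcylset t]; exact vCyl_measurableSet L _
    have hmu : ∀ t : (∀ i : Fin L, Fin (m i)),
        μ ((fun y : VG m => (fun i : Fin L => y i)) ⁻¹' {t}) = ((vM m L : ℝ≥0∞))⁻¹ := by
      intro t; rw [hcylset t]; exact hμ L _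
    have hind : ∀ x : VG m, H (fun i : Fin L => x i)
        = ∑ t : (∀ i : Fin L, Fin (m i)),
            Set.indicator ((fun y : VG m => (fun i : Fin L => y i)) ⁻¹' {t}) (fun _ => H t) x := by
      intro x
      rw [Finset.sum_eq_single (fun i : Fin L => x i)]
      · rw [Set.indicator_of_mem (by exact rfl)]
      · intro t _ hne
        rw [Set.indicator_of_notMem]
        intro hmem
        exact hne (Set.mem_preimage.1 hmem).symm
      · intro h; exact absurd (Finset.mem_univ _) h
    -- digit difference
    have hjL : j < vM m L := lt_of_le_of_lt (le_max_left j k)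
      ((lt_vM hm (max j k)).trans_le (vM_mono hm (Nat.le_succ _)))
    have hkL : k < vM m L := lt_of_le_of_lt (le_max_right j k)
      ((lt_vM hm (max j k)).trans_le (vM_mono hm (Nat.le_succ _)))
    have hdig : ¬ ∀ i < L, vdigit m j i = vdigit m k i := fun hal =>
      hjk (vdigit_inj hm hjL hkL hal)
    push_neg at hdig
    obtain ⟨i0, hi0L, hi0⟩ := hdig
    have hHsum : ∑ t : (∀ i : Fin L, Fin (m i)), H t = 0 := by
      have key := Finset.prod_univ_sum (fun i : Fin L => (Finset.univ : Finset (Fin (m i))))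
        (fun (i : Fin L) (a : Fin (m i)) =>
          vfac m (vdigit m j i) i a * (starRingEnd ℂ) (vfac m (vdigit m k i) i a))
      rw [Fintype.piFinset_univ] at key
      have key2 : ∑ t : (∀ i : Fin L, Fin (m i)), H t
          = ∏ i : Fin L, ∑ a : Fin (m i),
              (vfac m (vdigit m j i) i a * (starRingEnd ℂ) (vfac m (vdigit m k i) i a)) := key.symm
      rw [key2]
      apply Finset.prod_eq_zero (Finset.mem_univ (⟨i0, hi0L⟩ : Fin L))
      exact vfac_sum_eq_zero hm (vdigit_lt hm j i0) (vdigit_lt hm k i0) hi0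
    calc ∫ x, vpsi m j x * (starRingEnd ℂ) (vpsi m k x) ∂μ
        = ∫ x, ∑ t : (∀ i : Fin L, Fin (m i)),
            Set.indicator ((fun y : VG m => (fun i : Fin L => y i)) ⁻¹' {t}) (fun _ => H t) x ∂μ := by
          apply integral_congr_ae
          filter_upwards with x
          rw [hxprod x, hind x]
      _ = ∑ t : (∀ i : Fin L, Fin (m i)), ∫ x,
            Set.indicator ((fun y : VG m => (fun i : Fin L => y i)) ⁻¹' {t}) (fun _ => H t) x ∂μ :=
          integral_finset_sum _ (fun t _ => (integrable_const (H t)).indicator (hmeas t))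
      _ = ∑ t : (∀ i : Fin L, Fin (m i)), (((vM m L : ℝ≥0∞))⁻¹).toReal • H t := by
          apply Finset.sum_congr rfl
          intro t _
          rw [integral_indicator_const (H t) (hmeas t), measureReal_def, hmu t]
      _ = (((vM m L : ℝ≥0∞))⁻¹).toReal • ∑ t : (∀ i : Fin L, Fin (m i)), H t :=
          (Finset.smul_sum).symm
      _ = 0 := by rw [hHsum, smul_zero]


-- PART D : partial sum algebra
section partD
variable {μ : Measure (VG m)} [IsProbabilityMeasure μ]

lemma vS_apply (f : VG m → ℂ) (n : ℕ) :
    vS μ f n = fun x => ∑ k ∈ Finset.range n, vCoeff μ f k * vpsi m k x := rfl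

lemma vS_integrable (f : VG m → ℂ) (n : ℕ) : Integrable (vS μ f n) μ := by
  rw [vS_apply]
  exact integrable_finset_sum _ (fun k _ => (vpsi_integrable k).const_mul _)

lemma vS_measurable (f : VG m → ℂ) (n : ℕ) : Measurable (vS μ f n) := by
  rw [vS_apply]
  exact Finset.measurable_sum _ (fun k _ => (vpsi_measurable k).const_mul _)

lemma vSigma_integrable (f : VG m → ℂ) (n : ℕ) : Integrable (vSigma μ f n) μ := by
  have : vSigma μ f n = fun x => (n : ℂ)⁻¹ * ∑ k ∈ Finset.Icc 1 n, vS μ f k x := rfl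
  rw [this]
  exact (integrable_finset_sum _ (fun k _ => vS_integrable f k)).const_mul _

lemma vCoeff_vpsi (hm : ∀ k, 2 ≤ m k) (hμ : isVHaar μ) (k i : ℕ) :
    vCoeff μ (vpsi m k) i = if k = i then 1 else 0 :=
  vpsi_orth hm hμ k i

lemma vCoeff_add {g h : VG m → ℂ} (hg : Integrable g μ) (hh : Integrable h μ) (i : ℕ) :
    vCoeff μ (fun x => g x + h x) i = vCoeff μ g i + vCoeff μ h i := by
  unfold vCoeff
  rw [← integral_add (integrable_mul_conj_vpsi hg i) (integrable_mul_conj_vpsi hh i)]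
  congr 1; funext x; ring

lemma vCoeff_const_mul (c : ℂ) (g : VG m → ℂ) (i : ℕ) :
    vCoeff μ (fun x => c * g x) i = c * vCoeff μ g i := by
  unfold vCoeff
  have h : (fun x => (c * g x) * (starRingEnd ℂ) (vpsi m i x))
      = fun x => c • (g x * (starRingEnd ℂ) (vpsi m i x)) := by
    funext x; simp only [smul_eq_mul]; ring
  rw [h, integral_smul, smul_eq_mul]

lemma vCoeff_finset_sum {ι : Type*} (s : Finset ι) (F : ι → VG m → ℂ)
    (hF : ∀ k ∈ s, Integrable (F k) μ) (i : ℕ) :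
    vCoeff μ (fun x => ∑ k ∈ s, F k x) i = ∑ k ∈ s, vCoeff μ (F k) i := by
  unfold vCoeff
  rw [← integral_finset_sum s (fun k hk => integrable_mul_conj_vpsi (hF k hk) i)]
  congr 1; funext x; rw [Finset.sum_mul]

lemma vCoeff_vS (hm : ∀ k, 2 ≤ m k) (hμ : isVHaar μ) (f : VG m → ℂ) (M i : ℕ) :
    vCoeff μ (vS μ f M) i = if i < M then vCoeff μ f i else 0 := by
  have h1 : vCoeff μ (vS μ f M) i
      = ∑ k ∈ Finset.range M, vCoeff μ f k * (if k = i then 1 else 0) := by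
    rw [vS_apply]
    rw [vCoeff_finset_sum _ _ (fun k _ => (vpsi_integrable k).const_mul _)]
    exact Finset.sum_congr rfl (fun k _ => by
      rw [vCoeff_const_mul, vCoeff_vpsi hm hμ])
  rw [h1]
  simp only [mul_ite, mul_one, mul_zero]
  rw [Finset.sum_ite_eq' (Finset.range M) i (fun k => vCoeff μ f k)]
  simp [Finset.mem_range]

lemma vS_vS (hm : ∀ k, 2 ≤ m k) (hμ : isVHaar μ) (f : VG m → ℂ) (M n : ℕ) (x : VG m) :
    vS μ (vS μ f M) n x = vS μ f (min n M) x := by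
  show ∑ k ∈ Finset.range n, vCoeff μ (vS μ f M) k * vpsi m k x = _
  simp only [vCoeff_vS hm hμ, ite_mul, zero_mul]
  rw [← Finset.sum_filter]
  have : (Finset.range n).filter (fun k => k < M) = Finset.range (min n M) := by
    ext a; simp [lt_min_iff]
  rw [this]
  rfl

lemma vS_add {g h : VG m → ℂ} (hg : Integrable g μ) (hh : Integrable h μ) (n : ℕ) (x : VG m) :
    vS μ (fun y => g y + h y) n x = vS μ g n x + vS μ h n x := by
  show ∑ k ∈ Finset.range n, _ = _
  simp only [vCoeff_add hg hh, add_mul]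
  rw [Finset.sum_add_distrib]
  rfl

lemma vS_const_mul (c : ℂ) (g : VG m → ℂ) (n : ℕ) (x : VG m) :
    vS μ (fun y => c * g y) n x = c * vS μ g n x := by
  show ∑ k ∈ Finset.range n, _ = _
  simp only [vCoeff_const_mul, mul_assoc]
  rw [← Finset.mul_sum]
  rfl

lemma vSigma_add {g h : VG m → ℂ} (hg : Integrable g μ) (hh : Integrable h μ) (n : ℕ)
    (x : VG m) :
    vSigma μ (fun y => g y + h y) n x = vSigma μ g n x + vSigma μ h n x := by
  unfold vSigma
  simp only [vS_add hg hh]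
  rw [Finset.sum_add_distrib, mul_add]

lemma vSigma_const_mul (c : ℂ) (g : VG m → ℂ) (n : ℕ) (x : VG m) :
    vSigma μ (fun y => c * g y) n x = c * vSigma μ g n x := by
  unfold vSigma
  simp only [vS_const_mul]
  rw [← Finset.mul_sum]
  ring

lemma vSigma_vS_identity (hm : ∀ k, 2 ≤ m k) (hμ : isVHaar μ) (f : VG m → ℂ) {M n : ℕ}
    (hM : 0 < M) (hMn : M ≤ n) (x : VG m) :
    vSigma μ (vS μ f M) n x - vS μ f M x
      = ((M : ℂ) / n) * (vSigma μ f M x - vS μ f M x) := by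
  have hn : 0 < n := lt_of_lt_of_le hM hMn
  unfold vSigma
  have hsplit : Finset.Icc 1 n = Finset.Icc 1 M ∪ Finset.Icc (M+1) n := by
    ext a; simp only [Finset.mem_Icc, Finset.mem_union]; omega
  have hdisj : Disjoint (Finset.Icc 1 M) (Finset.Icc (M+1) n) := by
    rw [Finset.disjoint_left]; intro a h1 h2
    simp only [Finset.mem_Icc] at h1 h2; omega
  rw [hsplit, Finset.sum_union hdisj]
  have h1 : ∑ k ∈ Finset.Icc 1 M, vS μ (vS μ f M) k x = ∑ k ∈ Finset.Icc 1 M, vS μ f k x :=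
    Finset.sum_congr rfl (fun k hk => by
      rw [vS_vS hm hμ]
      congr 1
      simp only [Finset.mem_Icc] at hk
      omega)
  have h2 : ∑ k ∈ Finset.Icc (M+1) n, vS μ (vS μ f M) k x
      = ∑ k ∈ Finset.Icc (M+1) n, vS μ f M x :=
    Finset.sum_congr rfl (fun k hk => by
      rw [vS_vS hm hμ]
      congr 1
      simp only [Finset.mem_Icc] at hk
      omega)
  rw [h1, h2, Finset.sum_const, Nat.card_Icc]
  have hcard : n + 1 - (M + 1) = n - M := by omega
  rw [hcard, nsmul_eq_mul]
  have hMc : (M : ℂ) ≠ 0 := Nat.cast_ne_zero.2 hM.ne'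
  have hnc : (n : ℂ) ≠ 0 := Nat.cast_ne_zero.2 hn.ne'
  push_cast [Nat.cast_sub hMn]
  field_simp
  ring

lemma decomposition (hm : ∀ k, 2 ≤ m k) (hμ : isVHaar μ) {f : VG m → ℂ}
    (hf : Integrable f μ) {M n : ℕ} (hM : 0 < M) (hMn : M ≤ n) (x : VG m) :
    vSigma μ f n x - f x
      = vSigma μ (fun y => f y - vS μ f M y) n x
        + ((M : ℂ) / n) * (vSigma μ f M x - f x)
        + (-((M : ℂ) / n)) * (vS μ f M x - f x)
        + (vS μ f M x - f x) := by
  have hS := vS_integrable (μ := μ) f M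
  have hfeq : (fun y => (f y - vS μ f M y) + vS μ f M y) = f := by funext y; ring
  have step1 : vSigma μ f n x
      = vSigma μ (fun y => f y - vS μ f M y) n x + vSigma μ (vS μ f M) n x := by
    conv_lhs => rw [← hfeq]
    exact vSigma_add (hf.sub hS) hS n x
  have hid := vSigma_vS_identity hm hμ f hM hMn x
  rw [step1]
  linear_combination hid

end partD


-- PART E : H_p machinery
def vPhi (μ : Measure (VG m)) (p : ℝ) (g : VG m → ℂ) : ℝ≥0∞ :=
  ∫⁻ x, (⨆ k, ENNReal.ofReal ‖vS μ g (vM m k) x‖) ^ p ∂μ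

lemma vHp_eq_vPhi (μ : Measure (VG m)) (p : ℝ) (g : VG m → ℂ) :
    vHp μ p g = (vPhi μ p g) ^ (1 / p) := rfl

lemma vPhi_eq_vHp_rpow {p : ℝ} (hp0 : 0 < p) (μ : Measure (VG m)) (g : VG m → ℂ) :
    vPhi μ p g = (vHp μ p g) ^ p := by
  rw [vHp_eq_vPhi, ← ENNReal.rpow_mul, one_div, inv_mul_cancel₀ hp0.ne', ENNReal.rpow_one]

section partE
variable {μ : Measure (VG m)} [IsProbabilityMeasure μ]

lemma vSup_measurable (p : ℝ) (g : VG m → ℂ) :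
    Measurable (fun x => ⨆ k, ENNReal.ofReal ‖vS μ g (vM m k) x‖) :=
  Measurable.iSup (fun k => ENNReal.measurable_ofReal.comp
    (continuous_norm.measurable.comp (vS_measurable g (vM m k))))

lemma vPhi_add_le {p : ℝ} (hp0 : 0 < p) (hp1 : p ≤ 1) {g g1 g2 : VG m → ℂ}
    (hdec : ∀ n x, vS μ g n x = vS μ g1 n x + vS μ g2 n x) :
    vPhi μ p g ≤ vPhi μ p g1 + vPhi μ p g2 := by
  set U1 := fun x => ⨆ k, ENNReal.ofReal ‖vS μ g1 (vM m k) x‖ with hU1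
  set U2 := fun x => ⨆ k, ENNReal.ofReal ‖vS μ g2 (vM m k) x‖ with hU2
  have hpt : ∀ x, (⨆ k, ENNReal.ofReal ‖vS μ g (vM m k) x‖) ≤ U1 x + U2 x := by
    intro x
    apply iSup_le
    intro k
    rw [hdec]
    calc ENNReal.ofReal ‖vS μ g1 (vM m k) x + vS μ g2 (vM m k) x‖
        ≤ ENNReal.ofReal (‖vS μ g1 (vM m k) x‖ + ‖vS μ g2 (vM m k) x‖) :=
          ENNReal.ofReal_le_ofReal (norm_add_le _ _)
      _ = ENNReal.ofReal ‖vS μ g1 (vM m k) x‖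
            + ENNReal.ofReal ‖vS μ g2 (vM m k) x‖ :=
          ENNReal.ofReal_add (norm_nonneg _) (norm_nonneg _)
      _ ≤ U1 x + U2 x :=
          add_le_add
            (by rw [hU1]
                exact le_iSup (fun k => ENNReal.ofReal ‖vS μ g1 (vM m k) x‖) k)
            (by rw [hU2]
                exact le_iSup (fun k => ENNReal.ofReal ‖vS μ g2 (vM m k) x‖) k)
  calc vPhi μ p g ≤ ∫⁻ x, (U1 x + U2 x) ^ p ∂μ :=
        lintegral_mono (fun x => ENNReal.rpow_le_rpow (hpt x) hp0.le)
    _ ≤ ∫⁻ x, (U1 x ^ p + U2 x ^ p) ∂μ :=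
        lintegral_mono (fun x => ENNReal.rpow_add_le_add_rpow _ _ hp0.le hp1)
    _ = ∫⁻ x, U1 x ^ p ∂μ + ∫⁻ x, U2 x ^ p ∂μ :=
        lintegral_add_left ((vSup_measurable p g1).pow_const p) _
    _ = vPhi μ p g1 + vPhi μ p g2 := rfl

lemma vPhi_mono {p : ℝ} (hp0 : 0 ≤ p) {g h : VG m → ℂ}
    (hle : ∀ n x, ‖vS μ g n x‖ ≤ ‖vS μ h n x‖) :
    vPhi μ p g ≤ vPhi μ p h := by
  apply lintegral_mono
  intro x
  exact ENNReal.rpow_le_rpow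
    (iSup_mono (fun k => ENNReal.ofReal_le_ofReal (hle _ x))) hp0

lemma vHp_mono {p : ℝ} (hp0 : 0 < p) {g h : VG m → ℂ}
    (hle : ∀ n x, ‖vS μ g n x‖ ≤ ‖vS μ h n x‖) :
    vHp μ p g ≤ vHp μ p h := by
  rw [vHp_eq_vPhi, vHp_eq_vPhi]
  exact ENNReal.rpow_le_rpow (vPhi_mono hp0.le hle) (by positivity)

lemma vS_neg_flip (g h : VG m → ℂ) (n : ℕ) (x : VG m) :
    vS μ (fun y => g y - h y) n x = (-1 : ℂ) * vS μ (fun y => h y - g y) n x := by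
  have : (fun y => g y - h y) = fun y => (-1 : ℂ) * (h y - g y) := by funext y; ring
  rw [this, vS_const_mul]

end partE

-- index function
def vN (m : ℕ → ℕ) (n : ℕ) : ℕ := Nat.findGreatest (fun N => vM m N < n) n

lemma vN_spec1 (hm : ∀ k, 2 ≤ m k) {n : ℕ} (hn : 2 ≤ n) : vM m (vN m n) < n := by
  exact Nat.findGreatest_spec (P := fun N => vM m N < n) (m := 0) (by omega)
    (by show vM m 0 < n; simp [vM]; omega)

lemma vN_spec2 (hm : ∀ k, 2 ≤ m k) {n : ℕ} (hn : 2 ≤ n) : n ≤ vM m (vN m n + 1) := by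
  by_contra hcon
  push_neg at hcon
  exact Nat.findGreatest_is_greatest (P := fun N => vM m N < n) (n := n)
    (Nat.lt_succ_self _) (by show vN m n + 1 ≤ n; have := lt_vM hm (vN m n + 1); omega) hcon

lemma vN_ge (hm : ∀ k, 2 ≤ m k) {K n : ℕ} (hK : vM m K < n) : K ≤ vN m n :=
  Nat.le_findGreatest (P := fun N => vM m N < n) (by have := lt_vM hm K; omega) hK

lemma vN_tendsto (hm : ∀ k, 2 ≤ m k) : Tendsto (vN m) atTop atTop := by
  rw [tendsto_atTop]
  intro K
  filter_upwards [eventually_ge_atTop (vM m K + 1)] with n hn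
  exact vN_ge hm (by omega)

lemma vM_le_pow {B : ℕ} (hB : ∀ k, m k ≤ B) (N : ℕ) : vM m N ≤ B ^ N := by
  induction N with
  | zero => simp [vM]
  | succ N ih =>
    rw [vM_succ, pow_succ, Nat.mul_comm (B ^ N) B]
    exact Nat.mul_le_mul (hB N) ih

lemma tendsto_rpow_zero {ι : Type*} {l : Filter ι} {a : ι → ℝ≥0∞} (q : ℝ) (hq : 0 < q)
    (h : Tendsto a l (nhds 0)) : Tendsto (fun i => a i ^ q) l (nhds 0) := by
  have h2 := ((ENNReal.continuous_rpow_const (y := q)).tendsto 0).comp h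
  simpa [Function.comp_def, ENNReal.zero_rpow_of_pos hq] using h2


def seqU (m : ℕ → ℕ) (μ : Measure (VG m)) (p γ : ℝ) (e : ℕ) (f : VG m → ℂ) : ℕ → ℝ≥0∞ :=
  fun N => vHp μ p (fun x => vS μ f (vM m N) x - f x) * (vM m N : ℝ≥0∞) ^ γ
    * (N : ℝ≥0∞) ^ (e : ℝ)

/-- for `0 < p ≤ 1/2`, under the norm estimate for `σ_n`, convergence of
`σ_{M_N} f → f` in `H_p`, and the modulus-of-continuity condition
`ω_{H_p}(1/M_N, f) = o(M_N^{-(1/p-2)} N^{-2[1/2+p]})`, one has `‖σ_n f - f‖_{H_p} → 0`. -/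
theorem fejer_convergence_of_modulus (m : ℕ → ℕ) (hm : ∀ k, 2 ≤ m k) (hb : ∃ B, ∀ k, m k ≤ B)
    (μ : Measure (VG m)) [IsProbabilityMeasure μ] (hμ : isVHaar μ)
    (p : ℝ) (hp0 : 0 < p) (hp1 : p ≤ 1 / 2)
    (f : VG m → ℂ) (hf : Integrable f μ) (C : ℝ≥0)
    (hbound : ∀ g : VG m → ℂ, Integrable g μ → ∀ n : ℕ, 2 ≤ n →
      vHp μ p (vSigma μ g n) ≤
        C * (n : ℝ≥0∞) ^ (1 / p - 2) *
          (ENNReal.ofReal (Real.log n)) ^ (2 * Nat.floor (1 / 2 + p : ℝ)) * vHp μ p g)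
    (hconv : Tendsto (fun N : ℕ => vHp μ p (fun x => vSigma μ f (vM m N) x - f x))
      atTop (nhds 0))
    (hmod : Tendsto (fun N : ℕ =>
        vHp μ p (fun x => vS μ f (vM m N) x - f x) * (vM m N : ℝ≥0∞) ^ (1 / p - 2) *
          (N : ℝ≥0∞) ^ ((2 * Nat.floor (1 / 2 + p : ℝ) : ℕ) : ℝ))
      atTop (nhds 0)) :
    Tendsto (fun n : ℕ => vHp μ p (fun x => vSigma μ f n x - f x)) atTop (nhds 0) := by
  classical
  obtain ⟨B0, hB0⟩ := hb
  set B := max B0 2 with hBdef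
  have hB : ∀ k, m k ≤ B := fun k => le_trans (hB0 k) (le_max_left _ _)
  have hB2 : 2 ≤ B := le_max_right _ _
  set e : ℕ := 2 * Nat.floor (1 / 2 + p : ℝ) with he
  set γ : ℝ := 1 / p - 2 with hγdef
  have hγ : 0 ≤ γ := by
    rw [hγdef]
    have h2 : 2 ≤ 1 / p := by rw [le_div_iff₀ hp0]; linarith
    linarith
  have hp1' : p ≤ 1 := hp1.trans (by norm_num)
  have hU0 : Tendsto (seqU m μ p γ e f) atTop (nhds 0) := hmod
  set K : ℝ≥0∞ := (C : ℝ≥0∞) * (B : ℝ≥0∞) ^ γ * (ENNReal.ofReal (2 * Real.log B)) ^ e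
    with hKdef
  have hK : K ≠ ⊤ := by
    rw [hKdef]
    exact ENNReal.mul_ne_top (ENNReal.mul_ne_top ENNReal.coe_ne_top
      (ENNReal.rpow_ne_top_of_nonneg hγ (ENNReal.natCast_ne_top B)))
      (ENNReal.pow_ne_top ENNReal.ofReal_ne_top)
  -- W ≤ U eventually
  have hWU : ∀ N : ℕ, 1 ≤ N →
      vHp μ p (fun x => vS μ f (vM m N) x - f x) ≤ seqU m μ p γ e f N := by
    intro N hN
    have hb1 : (1 : ℝ≥0∞) ≤ (vM m N : ℝ≥0∞) ^ γ := by
      rw [← ENNReal.one_rpow γ]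
      apply ENNReal.rpow_le_rpow _ hγ
      exact_mod_cast Nat.succ_le_of_lt (vM_pos hm N)
    have hc1 : (1 : ℝ≥0∞) ≤ (N : ℝ≥0∞) ^ ((e : ℕ) : ℝ) := by
      rw [← ENNReal.one_rpow ((e : ℕ) : ℝ)]
      apply ENNReal.rpow_le_rpow _ (by positivity)
      exact_mod_cast hN
    calc vHp μ p (fun x => vS μ f (vM m N) x - f x)
        = vHp μ p (fun x => vS μ f (vM m N) x - f x) * 1 * 1 := by rw [mul_one, mul_one]
      _ ≤ seqU m μ p γ e f N := mul_le_mul' (mul_le_mul' le_rfl hb1) hc1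
  have hWten : Tendsto (fun N : ℕ => vHp μ p (fun x => vS μ f (vM m N) x - f x))
      atTop (nhds 0) := by
    apply tendsto_of_tendsto_of_tendsto_of_le_of_le' tendsto_const_nhds hU0
    · filter_upwards with N using zero_le
    · filter_upwards [eventually_ge_atTop 1] with N hN using hWU N hN
  have hUvN : Tendsto (fun n : ℕ => seqU m μ p γ e f (vN m n)) atTop (nhds 0) :=
    hU0.comp (vN_tendsto hm)
  have hVvN : Tendsto (fun n : ℕ =>
      vHp μ p (fun x => vSigma μ f (vM m (vN m n)) x - f x)) atTop (nhds 0) :=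
    hconv.comp (vN_tendsto hm)
  have hWvN : Tendsto (fun n : ℕ =>
      vHp μ p (fun x => vS μ f (vM m (vN m n)) x - f x)) atTop (nhds 0) :=
    hWten.comp (vN_tendsto hm)
  set R : ℕ → ℝ≥0∞ := fun n =>
    (K * seqU m μ p γ e f (vN m n)) ^ p
      + (vHp μ p (fun x => vSigma μ f (vM m (vN m n)) x - f x)) ^ p
      + (vHp μ p (fun x => vS μ f (vM m (vN m n)) x - f x)) ^ p
      + (vHp μ p (fun x => vS μ f (vM m (vN m n)) x - f x)) ^ p with hRdef
  have hR0 : Tendsto R atTop (nhds 0) := by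
    have t1 : Tendsto (fun n : ℕ => (K * seqU m μ p γ e f (vN m n)) ^ p) atTop (nhds 0) := by
      apply tendsto_rpow_zero p hp0
      have h := ENNReal.Tendsto.const_mul (a := K) hUvN (Or.inr hK)
      rw [mul_zero] at h
      exact h
    have t2 : Tendsto (fun n : ℕ =>
        (vHp μ p (fun x => vSigma μ f (vM m (vN m n)) x - f x)) ^ p) atTop (nhds 0) :=
      tendsto_rpow_zero p hp0 hVvN
    have t3 : Tendsto (fun n : ℕ =>
        (vHp μ p (fun x => vS μ f (vM m (vN m n)) x - f x)) ^ p) atTop (nhds 0) :=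
      tendsto_rpow_zero p hp0 hWvN
    have hsum := ((t1.add t2).add t3).add t3
    rw [hRdef]
    simpa using hsum
  -- the main eventual bound
  have hmain : ∀ᶠ (n : ℕ) in atTop, vPhi μ p (fun x => vSigma μ f n x - f x) ≤ R n := by
    have hm1 : vM m 1 = m 0 := by rw [vM_succ]; simp [vM]
    filter_upwards [eventually_ge_atTop (vM m 1 + 1)] with n hn
    have hn2 : 2 ≤ n := by have := hm 0; omega
    show vPhi μ p (fun x => vSigma μ f n x - f x) ≤
      (K * seqU m μ p γ e f (vN m n)) ^ p
        + (vHp μ p (fun x => vSigma μ f (vM m (vN m n)) x - f x)) ^ p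
        + (vHp μ p (fun x => vS μ f (vM m (vN m n)) x - f x)) ^ p
        + (vHp μ p (fun x => vS μ f (vM m (vN m n)) x - f x)) ^ p
    set N := vN m n with hN
    set M := vM m N with hM
    have hMn : M < n := vN_spec1 hm hn2
    have hnM1 : n ≤ vM m (N + 1) := vN_spec2 hm hn2
    have hN1 : 1 ≤ N := vN_ge hm (by omega)
    have hM1 : 0 < M := vM_pos hm N
    have hnB : n ≤ B * M := le_trans hnM1 (by rw [hM, vM_succ]; exact Nat.mul_le_mul_right _ (hB N))
    have hS := vS_integrable (μ := μ) f M
    have hσM := vSigma_integrable (μ := μ) f M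
    set c : ℂ := (M : ℂ) / n with hc
    have habs_c : ‖c‖ ≤ 1 := by
      rw [hc, norm_div, Complex.norm_natCast, Complex.norm_natCast]
      apply div_le_one_of_le₀
      · exact_mod_cast hMn.le
      · positivity
    -- decomposition
    have hg12int : Integrable (fun x => vSigma μ (fun y => f y - vS μ f M y) n x
        + c * (vSigma μ f M x - f x)) μ :=
      (vSigma_integrable _ n).add ((hσM.sub hf).const_mul c)
    have hg34int : Integrable (fun x => (-c) * (vS μ f M x - f x) + (vS μ f M x - f x)) μ :=
      ((hS.sub hf).const_mul (-c)).add (hS.sub hf)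
    have hdecA : ∀ ℓ (x : VG m), vS μ (fun x => vSigma μ f n x - f x) ℓ x
        = vS μ (fun x => vSigma μ (fun y => f y - vS μ f M y) n x
            + c * (vSigma μ f M x - f x)) ℓ x
          + vS μ (fun x => (-c) * (vS μ f M x - f x) + (vS μ f M x - f x)) ℓ x := by
      intro ℓ x
      have h1 : (fun x => vSigma μ f n x - f x) = fun x =>
          (vSigma μ (fun y => f y - vS μ f M y) n x + c * (vSigma μ f M x - f x))
            + ((-c) * (vS μ f M x - f x) + (vS μ f M x - f x)) := by
        funext y
        rw [decomposition hm hμ hf hM1 hMn.le y, hc]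
        ring
      rw [h1]
      exact vS_add hg12int hg34int ℓ x
    have hPhiA := vPhi_add_le hp0 hp1' hdecA
    have hdecB : ∀ ℓ (x : VG m), vS μ (fun x => vSigma μ (fun y => f y - vS μ f M y) n x
        + c * (vSigma μ f M x - f x)) ℓ x
        = vS μ (vSigma μ (fun y => f y - vS μ f M y) n) ℓ x
          + vS μ (fun x => c * (vSigma μ f M x - f x)) ℓ x :=
      fun ℓ x => vS_add (vSigma_integrable _ n) ((hσM.sub hf).const_mul c) ℓ x
    have hPhiB := vPhi_add_le hp0 hp1' hdecB
    have hdecC : ∀ ℓ (x : VG m), vS μ (fun x => (-c) * (vS μ f M x - f x)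
        + (vS μ f M x - f x)) ℓ x
        = vS μ (fun x => (-c) * (vS μ f M x - f x)) ℓ x
          + vS μ (fun x => vS μ f M x - f x) ℓ x :=
      fun ℓ x => vS_add ((hS.sub hf).const_mul (-c)) (hS.sub hf) ℓ x
    have hPhiC := vPhi_add_le hp0 hp1' hdecC
    -- term 2
    have hg2 : vPhi μ p (fun x => c * (vSigma μ f M x - f x))
        ≤ (vHp μ p (fun x => vSigma μ f M x - f x)) ^ p := by
      rw [← vPhi_eq_vHp_rpow hp0]
      apply vPhi_mono hp0.le
      intro ℓ x
      rw [vS_const_mul c (fun y => vSigma μ f M y - f y) ℓ x, norm_mul]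
      exact mul_le_of_le_one_left (norm_nonneg _) habs_c
    -- term 3
    have habs_c' : ‖-c‖ ≤ 1 := by rwa [norm_neg]
    have hg3 : vPhi μ p (fun x => (-c) * (vS μ f M x - f x))
        ≤ (vHp μ p (fun x => vS μ f M x - f x)) ^ p := by
      rw [← vPhi_eq_vHp_rpow hp0]
      apply vPhi_mono hp0.le
      intro ℓ x
      rw [vS_const_mul (-c) (fun y => vS μ f M y - f y) ℓ x, norm_mul]
      exact mul_le_of_le_one_left (norm_nonneg _) habs_c'
    -- term 4
    have hg4 : vPhi μ p (fun x => vS μ f M x - f x)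
        = (vHp μ p (fun x => vS μ f M x - f x)) ^ p := vPhi_eq_vHp_rpow hp0 μ _
    -- term 1
    have hg1 : vHp μ p (vSigma μ (fun y => f y - vS μ f M y) n)
        ≤ (C : ℝ≥0∞) * (n : ℝ≥0∞) ^ γ * (ENNReal.ofReal (Real.log n)) ^ e
          * vHp μ p (fun y => f y - vS μ f M y) :=
      hbound _ (hf.sub hS) n hn2
    have hfSle : vHp μ p (fun y => f y - vS μ f M y)
        ≤ vHp μ p (fun x => vS μ f M x - f x) := by
      apply vHp_mono hp0
      intro ℓ x
      rw [vS_neg_flip f (vS μ f M) ℓ x, norm_mul]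
      simp
    have hfac : (C : ℝ≥0∞) * (n : ℝ≥0∞) ^ γ * (ENNReal.ofReal (Real.log n)) ^ e
        ≤ (C : ℝ≥0∞) * ((B : ℝ≥0∞) ^ γ * (M : ℝ≥0∞) ^ γ)
          * ((ENNReal.ofReal (2 * Real.log B)) ^ e * ((N : ℝ≥0∞) ^ ((e : ℕ) : ℝ))) := by
      have h1 : (n : ℝ≥0∞) ^ γ ≤ (B : ℝ≥0∞) ^ γ * (M : ℝ≥0∞) ^ γ := by
        rw [← ENNReal.mul_rpow_of_nonneg _ _ hγ]
        apply ENNReal.rpow_le_rpow _ hγ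
        exact_mod_cast hnB
      have h2 : (ENNReal.ofReal (Real.log n)) ^ e
          ≤ (ENNReal.ofReal (2 * Real.log B)) ^ e * ((N : ℝ≥0∞) ^ ((e : ℕ) : ℝ)) := by
        have hBpos : (1 : ℝ) ≤ (B : ℝ) := by exact_mod_cast (by omega : 1 ≤ B)
        have hlogB : 0 ≤ Real.log B := Real.log_nonneg hBpos
        have hlog : Real.log n ≤ (2 * Real.log B) * N := by
          have hnpos : (0 : ℝ) < (n : ℝ) := by exact_mod_cast (by omega : 0 < n)
          have hle : (n : ℝ) ≤ ((B : ℝ)) ^ (N + 1) := by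
            calc (n : ℝ) ≤ (vM m (N + 1) : ℝ) := by exact_mod_cast hnM1
              _ ≤ ((B : ℝ)) ^ (N + 1) := by exact_mod_cast vM_le_pow hB (N + 1)
          have hlog1 : Real.log n ≤ Real.log ((B : ℝ) ^ (N + 1)) :=
            Real.log_le_log hnpos hle
          rw [Real.log_pow] at hlog1
          have hNcast : (1 : ℝ) ≤ (N : ℝ) := by exact_mod_cast hN1
          push_cast at hlog1
          nlinarith
        calc (ENNReal.ofReal (Real.log n)) ^ e
            ≤ (ENNReal.ofReal ((2 * Real.log B) * N)) ^ e :=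
              pow_le_pow_left' (ENNReal.ofReal_le_ofReal hlog) e
          _ = (ENNReal.ofReal (2 * Real.log B)) ^ e * ((N : ℝ≥0∞) ^ ((e : ℕ) : ℝ)) := by
              rw [ENNReal.ofReal_mul (by positivity), ENNReal.ofReal_natCast, mul_pow,
                ENNReal.rpow_natCast]
      exact mul_le_mul' (mul_le_mul' le_rfl h1) h2
    have hg1' : vPhi μ p (vSigma μ (fun y => f y - vS μ f M y) n)
        ≤ (K * seqU m μ p γ e f N) ^ p := by
      rw [vPhi_eq_vHp_rpow hp0]
      apply ENNReal.rpow_le_rpow _ hp0.le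
      calc vHp μ p (vSigma μ (fun y => f y - vS μ f M y) n)
          ≤ (C : ℝ≥0∞) * (n : ℝ≥0∞) ^ γ * (ENNReal.ofReal (Real.log n)) ^ e
            * vHp μ p (fun y => f y - vS μ f M y) := hg1
        _ ≤ ((C : ℝ≥0∞) * ((B : ℝ≥0∞) ^ γ * (M : ℝ≥0∞) ^ γ)
            * ((ENNReal.ofReal (2 * Real.log B)) ^ e * ((N : ℝ≥0∞) ^ ((e : ℕ) : ℝ))))
            * vHp μ p (fun x => vS μ f M x - f x) := mul_le_mul' hfac hfSle
        _ = K * seqU m μ p γ e f N := by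
            rw [hKdef]
            show _ = _ * (vHp μ p (fun x => vS μ f M x - f x) * (M : ℝ≥0∞) ^ γ
              * (N : ℝ≥0∞) ^ ((e : ℕ) : ℝ))
            ring
    -- combine
    calc vPhi μ p (fun x => vSigma μ f n x - f x)
        ≤ vPhi μ p (fun x => vSigma μ (fun y => f y - vS μ f M y) n x
            + c * (vSigma μ f M x - f x))
          + vPhi μ p (fun x => (-c) * (vS μ f M x - f x) + (vS μ f M x - f x)) := hPhiA
      _ ≤ (vPhi μ p (vSigma μ (fun y => f y - vS μ f M y) n)
            + vPhi μ p (fun x => c * (vSigma μ f M x - f x)))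
          + (vPhi μ p (fun x => (-c) * (vS μ f M x - f x))
            + vPhi μ p (fun x => vS μ f M x - f x)) := add_le_add hPhiB hPhiC
      _ ≤ ((K * seqU m μ p γ e f N) ^ p
            + (vHp μ p (fun x => vSigma μ f M x - f x)) ^ p)
          + ((vHp μ p (fun x => vS μ f M x - f x)) ^ p
            + (vHp μ p (fun x => vS μ f M x - f x)) ^ p) :=
          add_le_add (add_le_add hg1' hg2) (add_le_add hg3 hg4.le)
      _ = (K * seqU m μ p γ e f N) ^ p
            + (vHp μ p (fun x => vSigma μ f M x - f x)) ^ p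
            + (vHp μ p (fun x => vS μ f M x - f x)) ^ p
            + (vHp μ p (fun x => vS μ f M x - f x)) ^ p := by ring
  have hPhi0 : Tendsto (fun n : ℕ => vPhi μ p (fun x => vSigma μ f n x - f x))
      atTop (nhds 0) :=
    tendsto_of_tendsto_of_tendsto_of_le_of_le' tendsto_const_nhds hR0
      (Eventually.of_forall fun n => zero_le) hmain
  have hfinal : (fun n : ℕ => vHp μ p (fun x => vSigma μ f n x - f x))
      = fun n : ℕ => (vPhi μ p (fun x => vSigma μ f n x - f x)) ^ (1 / p) := rfl
  rw [hfinal]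
  exact tendsto_rpow_zero (1 / p) (by positivity) hPhi0

end
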